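/- Define the diamond norm of a bipartite operator Q on ℂ^n ⊗ ℂ^n as ‖Q‖_⋄ = inf over all decompositions Q = ∑_t A_t ⊗ B_t† of sqrt(‖∑_t A_t† A_t‖) · sqrt(‖∑_t B_t† B_t‖). Then the diamond norm is a tensor norm: if Q = A ⊗ B then ‖Q‖_⋄ = ‖A‖ · ‖B‖. -/

import Mathlib

open scoped Kronecker Matrix Matrix.Norms.L2Operator

/-- The diamond norm of a bipartite operator `Q` on `ℂ^{nA} ⊗ ℂ^{nB}`:
the infimum over finite decompositions `Q = ∑_t A_t ⊗ B_tᴴ` of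
`√‖∑_t A_tᴴ A_t‖ · √‖∑_t B_tᴴ B_t‖` (operator norms). -/
noncomputable def diamondNorm {nA nB : ℕ}
    (Q : Matrix (Fin nA × Fin nB) (Fin nA × Fin nB) ℂ) : ℝ :=
  sInf { r : ℝ | ∃ (T : ℕ) (A : Fin T → Matrix (Fin nA) (Fin nA) ℂ)
      (B : Fin T → Matrix (Fin nB) (Fin nB) ℂ),
      Q = ∑ t, (A t) ⊗ₖ (B t)ᴴ ∧
      r = Real.sqrt ‖∑ t, (A t)ᴴ * A t‖ * Real.sqrt ‖∑ t, (B t)ᴴ * B t‖ }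


section DiamondAux

open Matrix

variable {nA nB : ℕ}

variable {nA nB : ℕ}

lemma norm_sq_eq_sum {ι : Type*} [Fintype ι] (v : EuclideanSpace ℂ ι) :
    ‖v‖ ^ 2 = ∑ i, ‖v i‖ ^ 2 := by
  rw [EuclideanSpace.norm_eq, Real.sq_sqrt (by positivity)]

lemma sq_sum_mulVec_le {n : ℕ} (C : Matrix (Fin n) (Fin n) ℂ) (w : Fin n → ℂ) :
    ∑ j, ‖(C *ᵥ w) j‖ ^ 2 ≤ ‖C‖ ^ 2 * ∑ j, ‖w j‖ ^ 2 := by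
  have h := C.l2_opNorm_mulVec ((WithLp.equiv 2 _).symm w)
  have h2 : ‖(EuclideanSpace.equiv (Fin n) ℂ).symm (C *ᵥ w)‖ ^ 2 ≤
      (‖C‖ * ‖(WithLp.equiv 2 _).symm w‖) ^ 2 := by
    apply pow_le_pow_left₀ (norm_nonneg _) h
  rw [norm_sq_eq_sum, mul_pow] at h2
  calc ∑ j, ‖(C *ᵥ w) j‖ ^ 2 ≤ ‖C‖ ^ 2 * ‖(WithLp.equiv 2 (∀ _ : Fin n, ℂ)).symm w‖ ^ 2 := h2
    _ = ‖C‖ ^ 2 * ∑ j, ‖w j‖ ^ 2 := by rw [norm_sq_eq_sum]; rfl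

lemma one_kron_mulVec (C : Matrix (Fin nB) (Fin nB) ℂ) (x : Fin nA × Fin nB → ℂ)
    (i : Fin nA) (j : Fin nB) :
    (((1 : Matrix (Fin nA) (Fin nA) ℂ) ⊗ₖ C) *ᵥ x) (i, j)
      = (C *ᵥ fun j' => x (i, j')) j := by
  simp [Matrix.mulVec, dotProduct, Fintype.sum_prod_type, Matrix.one_apply,
    Finset.sum_ite_eq, ite_mul]

lemma kron_one_mulVec (C : Matrix (Fin nA) (Fin nA) ℂ) (x : Fin nA × Fin nB → ℂ)
    (i : Fin nA) (j : Fin nB) :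
    ((C ⊗ₖ (1 : Matrix (Fin nB) (Fin nB) ℂ)) *ᵥ x) (i, j)
      = (C *ᵥ fun i' => x (i', j)) i := by
  simp [Matrix.mulVec, dotProduct, Fintype.sum_prod_type, Matrix.one_apply,
    Finset.sum_ite_eq, ite_mul, mul_comm]

lemma opNorm_one_kron_le (C : Matrix (Fin nB) (Fin nB) ℂ) :
    ‖(1 : Matrix (Fin nA) (Fin nA) ℂ) ⊗ₖ C‖ ≤ ‖C‖ := by
  rw [Matrix.cstar_norm_def]
  apply ContinuousLinearMap.opNorm_le_bound _ (norm_nonneg C)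
  intro x
  have key : ‖toEuclideanCLM (𝕜 := ℂ) ((1 : Matrix (Fin nA) (Fin nA) ℂ) ⊗ₖ C) x‖ ^ 2
      ≤ (‖C‖ * ‖x‖) ^ 2 := by
    rw [norm_sq_eq_sum, mul_pow, norm_sq_eq_sum]
    have : ∀ p : Fin nA × Fin nB,
        (toEuclideanCLM (𝕜 := ℂ) ((1 : Matrix (Fin nA) (Fin nA) ℂ) ⊗ₖ C) x) p
          = (C *ᵥ fun j' => x (p.1, j')) p.2 := fun p => one_kron_mulVec C _ p.1 p.2
    calc ∑ p : Fin nA × Fin nB,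
          ‖(toEuclideanCLM (𝕜 := ℂ) ((1 : Matrix (Fin nA) (Fin nA) ℂ) ⊗ₖ C) x) p‖ ^ 2
        = ∑ p : Fin nA × Fin nB, ‖(C *ᵥ fun j' => x (p.1, j')) p.2‖ ^ 2 :=
          Finset.sum_congr rfl fun p _ => by rw [this p]
      _ = ∑ i, ∑ j, ‖(C *ᵥ fun j' => x (i, j')) j‖ ^ 2 := Fintype.sum_prod_type _
      _ ≤ ∑ i, ‖C‖ ^ 2 * ∑ j, ‖x (i, j)‖ ^ 2 := by
          exact Finset.sum_le_sum fun i _ => sq_sum_mulVec_le C _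
      _ = ‖C‖ ^ 2 * ∑ p : Fin nA × Fin nB, ‖x p‖ ^ 2 := by
          rw [Fintype.sum_prod_type, Finset.mul_sum]
  calc ‖toEuclideanCLM (𝕜 := ℂ) ((1 : Matrix (Fin nA) (Fin nA) ℂ) ⊗ₖ C) x‖
      ≤ ‖C‖ * ‖x‖ := by
        have := Real.sqrt_le_sqrt key
        rwa [Real.sqrt_sq (norm_nonneg _), Real.sqrt_sq (by positivity)] at this

lemma opNorm_kron_one_le (C : Matrix (Fin nA) (Fin nA) ℂ) :
    ‖C ⊗ₖ (1 : Matrix (Fin nB) (Fin nB) ℂ)‖ ≤ ‖C‖ := by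
  rw [Matrix.cstar_norm_def]
  apply ContinuousLinearMap.opNorm_le_bound _ (norm_nonneg C)
  intro x
  have key : ‖toEuclideanCLM (𝕜 := ℂ) (C ⊗ₖ (1 : Matrix (Fin nB) (Fin nB) ℂ)) x‖ ^ 2
      ≤ (‖C‖ * ‖x‖) ^ 2 := by
    rw [norm_sq_eq_sum, mul_pow, norm_sq_eq_sum]
    have : ∀ p : Fin nA × Fin nB,
        (toEuclideanCLM (𝕜 := ℂ) (C ⊗ₖ (1 : Matrix (Fin nB) (Fin nB) ℂ)) x) p
          = (C *ᵥ fun i' => x (i', p.2)) p.1 := fun p => kron_one_mulVec C _ p.1 p.2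
    calc ∑ p : Fin nA × Fin nB,
          ‖(toEuclideanCLM (𝕜 := ℂ) (C ⊗ₖ (1 : Matrix (Fin nB) (Fin nB) ℂ)) x) p‖ ^ 2
        = ∑ p : Fin nA × Fin nB, ‖(C *ᵥ fun i' => x (i', p.2)) p.1‖ ^ 2 :=
          Finset.sum_congr rfl fun p _ => by rw [this p]
      _ = ∑ j, ∑ i, ‖(C *ᵥ fun i' => x (i', j)) i‖ ^ 2 := Fintype.sum_prod_type_right _
      _ ≤ ∑ j, ‖C‖ ^ 2 * ∑ i, ‖x (i, j)‖ ^ 2 :=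
          Finset.sum_le_sum fun j _ => sq_sum_mulVec_le C _
      _ = ‖C‖ ^ 2 * ∑ p : Fin nA × Fin nB, ‖x p‖ ^ 2 := by
          rw [Fintype.sum_prod_type_right, Finset.mul_sum]
  have := Real.sqrt_le_sqrt key
  rwa [Real.sqrt_sq (norm_nonneg _), Real.sqrt_sq (by positivity)] at this

noncomputable def tens (x : EuclideanSpace ℂ (Fin nA)) (y : EuclideanSpace ℂ (Fin nB)) :
    EuclideanSpace ℂ (Fin nA × Fin nB) :=
  (WithLp.equiv 2 _).symm fun p => x p.1 * y p.2

lemma tens_norm (x : EuclideanSpace ℂ (Fin nA)) (y : EuclideanSpace ℂ (Fin nB)) :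
    ‖tens x y‖ = ‖x‖ * ‖y‖ := by
  have h : ‖tens x y‖ ^ 2 = (‖x‖ * ‖y‖) ^ 2 := by
    rw [norm_sq_eq_sum, mul_pow, norm_sq_eq_sum, norm_sq_eq_sum, Finset.sum_mul_sum]
    rw [show (∑ i : Fin nA × Fin nB, ‖tens x y i‖ ^ 2)
        = ∑ p : Fin nA × Fin nB, ‖x p.1‖ ^ 2 * ‖y p.2‖ ^ 2 from
      Finset.sum_congr rfl fun p _ => by
        show ‖x p.1 * y p.2‖ ^ 2 = _; rw [norm_mul, mul_pow]]
    exact Fintype.sum_prod_type _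
  have := congrArg Real.sqrt h
  rwa [Real.sqrt_sq (norm_nonneg _), Real.sqrt_sq (by positivity)] at this

lemma toEuclideanCLM_kron_tens (M : Matrix (Fin nA) (Fin nA) ℂ)
    (N : Matrix (Fin nB) (Fin nB) ℂ) (x : EuclideanSpace ℂ (Fin nA))
    (y : EuclideanSpace ℂ (Fin nB)) :
    toEuclideanCLM (𝕜 := ℂ) (M ⊗ₖ N) (tens x y)
      = tens (toEuclideanCLM (𝕜 := ℂ) M x) (toEuclideanCLM (𝕜 := ℂ) N y) := by
  ext p
  show ((M ⊗ₖ N) *ᵥ fun q => x q.1 * y q.2) p = (M *ᵥ x) p.1 * (N *ᵥ y) p.2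
  simp only [Matrix.mulVec, dotProduct, Fintype.sum_prod_type, kroneckerMap_apply,
    Finset.sum_mul_sum]
  rw [Finset.sum_congr rfl fun i' _ => Finset.sum_congr rfl fun j' _ => ?_]
  ring

lemma norm_mul_norm_le_opNorm_kron (M : Matrix (Fin nA) (Fin nA) ℂ)
    (N : Matrix (Fin nB) (Fin nB) ℂ) :
    ‖M‖ * ‖N‖ ≤ ‖M ⊗ₖ N‖ := by
  set c := ‖M ⊗ₖ N‖ with hc
  have hc0 : 0 ≤ c := norm_nonneg _
  have key : ∀ (x : EuclideanSpace ℂ (Fin nA)) (y : EuclideanSpace ℂ (Fin nB)),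
      ‖toEuclideanCLM (𝕜 := ℂ) M x‖ * ‖toEuclideanCLM (𝕜 := ℂ) N y‖ ≤ c * (‖x‖ * ‖y‖) := by
    intro x y
    calc ‖toEuclideanCLM (𝕜 := ℂ) M x‖ * ‖toEuclideanCLM (𝕜 := ℂ) N y‖
        = ‖tens (toEuclideanCLM (𝕜 := ℂ) M x) (toEuclideanCLM (𝕜 := ℂ) N y)‖ :=
          (tens_norm _ _).symm
      _ = ‖toEuclideanCLM (𝕜 := ℂ) (M ⊗ₖ N) (tens x y)‖ := by
          rw [toEuclideanCLM_kron_tens]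
      _ ≤ ‖toEuclideanCLM (𝕜 := ℂ) (M ⊗ₖ N)‖ * ‖tens x y‖ :=
          ContinuousLinearMap.le_opNorm _ _
      _ = c * (‖x‖ * ‖y‖) := by rw [tens_norm, ← Matrix.cstar_norm_def]
  have step : ∀ y : EuclideanSpace ℂ (Fin nB),
      ‖M‖ * ‖toEuclideanCLM (𝕜 := ℂ) N y‖ ≤ c * ‖y‖ := by
    intro y
    rcases eq_or_lt_of_le (norm_nonneg (toEuclideanCLM (𝕜 := ℂ) N y)) with h0 | hpos
    · rw [← h0, mul_zero]; positivity
    · rw [← le_div_iff₀ hpos]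
      rw [Matrix.cstar_norm_def]
      apply ContinuousLinearMap.opNorm_le_bound _ (by positivity)
      intro x
      rw [div_mul_eq_mul_div, le_div_iff₀ hpos]
      calc ‖toEuclideanCLM (𝕜 := ℂ) M x‖ * ‖toEuclideanCLM (𝕜 := ℂ) N y‖
          ≤ c * (‖x‖ * ‖y‖) := key x y
        _ = c * ‖y‖ * ‖x‖ := by ring
  rcases eq_or_lt_of_le (norm_nonneg M) with h0 | hpos
  · rw [← h0, zero_mul]; exact hc0
  · rw [← le_div_iff₀' hpos, Matrix.cstar_norm_def]
    apply ContinuousLinearMap.opNorm_le_bound _ (by positivity)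
    intro y
    rw [div_mul_eq_mul_div, le_div_iff₀' hpos]
    exact step y

lemma kron_conjTranspose (M : Matrix (Fin nA) (Fin nA) ℂ) (N : Matrix (Fin nB) (Fin nB) ℂ) :
    (M ⊗ₖ N)ᴴ = Mᴴ ⊗ₖ Nᴴ := by
  ext p q
  simp [Matrix.conjTranspose_apply]

lemma one_kron_sum {T : ℕ} (D : Fin T → Matrix (Fin nB) (Fin nB) ℂ) :
    (1 : Matrix (Fin nA) (Fin nA) ℂ) ⊗ₖ (∑ t, D t) = ∑ t, (1 : Matrix (Fin nA) (Fin nA) ℂ) ⊗ₖ D t := by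
  ext p q
  simp [Matrix.sum_apply, Finset.mul_sum]

lemma sum_kron_one {T : ℕ} (D : Fin T → Matrix (Fin nA) (Fin nA) ℂ) :
    (∑ t, D t) ⊗ₖ (1 : Matrix (Fin nB) (Fin nB) ℂ) = ∑ t, D t ⊗ₖ (1 : Matrix (Fin nB) (Fin nB) ℂ) := by
  ext p q
  simp [Matrix.sum_apply, Finset.sum_mul]

lemma toEuclideanCLM_conjTranspose {ι : Type*} [Fintype ι] [DecidableEq ι] (M : Matrix ι ι ℂ) :
    toEuclideanCLM (𝕜 := ℂ) Mᴴ
      = ContinuousLinearMap.adjoint (toEuclideanCLM (𝕜 := ℂ) M) := by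
  rw [← ContinuousLinearMap.star_eq_adjoint, ← map_star]
  rfl

lemma re_inner_CLM_le {ι : Type*} [Fintype ι] [DecidableEq ι] (M : Matrix ι ι ℂ)
    (y : EuclideanSpace ℂ ι) :
    RCLike.re (inner (𝕜 := ℂ) y (toEuclideanCLM (𝕜 := ℂ) M y)) ≤ ‖M‖ * ‖y‖ ^ 2 := by
  calc RCLike.re (inner (𝕜 := ℂ) y (toEuclideanCLM (𝕜 := ℂ) M y))
      ≤ ‖(inner (𝕜 := ℂ) y (toEuclideanCLM (𝕜 := ℂ) M y) : ℂ)‖ := RCLike.re_le_norm _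
    _ ≤ ‖y‖ * ‖toEuclideanCLM (𝕜 := ℂ) M y‖ := norm_inner_le_norm _ _
    _ ≤ ‖y‖ * (‖toEuclideanCLM (𝕜 := ℂ) M‖ * ‖y‖) := by
        gcongr
        exact ContinuousLinearMap.le_opNorm _ _
    _ = ‖M‖ * ‖y‖ ^ 2 := by rw [← Matrix.cstar_norm_def]; ring

lemma norm_sq_CLM_apply {ι : Type*} [Fintype ι] [DecidableEq ι] (M : Matrix ι ι ℂ)
    (y : EuclideanSpace ℂ ι) :
    ‖toEuclideanCLM (𝕜 := ℂ) M y‖ ^ 2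
      = RCLike.re (inner (𝕜 := ℂ) y (toEuclideanCLM (𝕜 := ℂ) (Mᴴ * M) y)) := by
  rw [_root_.map_mul, ContinuousLinearMap.mul_apply, toEuclideanCLM_conjTranspose,
    ContinuousLinearMap.adjoint_inner_right]
  exact (inner_self_eq_norm_sq _).symm

lemma sum_norm_sq_one_kron_le {T : ℕ} (B : Fin T → Matrix (Fin nB) (Fin nB) ℂ)
    (y : EuclideanSpace ℂ (Fin nA × Fin nB)) :
    ∑ t, ‖toEuclideanCLM (𝕜 := ℂ) ((1 : Matrix (Fin nA) (Fin nA) ℂ) ⊗ₖ B t) y‖ ^ 2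
      ≤ ‖∑ t, (B t)ᴴ * B t‖ * ‖y‖ ^ 2 := by
  have key : ∀ t, ((1 : Matrix (Fin nA) (Fin nA) ℂ) ⊗ₖ B t)ᴴ
      * ((1 : Matrix (Fin nA) (Fin nA) ℂ) ⊗ₖ B t)
      = (1 : Matrix (Fin nA) (Fin nA) ℂ) ⊗ₖ ((B t)ᴴ * B t) := fun t => by
    rw [kron_conjTranspose, Matrix.conjTranspose_one, ← Matrix.mul_kronecker_mul, one_mul]
  have hsum : toEuclideanCLM (𝕜 := ℂ)
      ((1 : Matrix (Fin nA) (Fin nA) ℂ) ⊗ₖ ∑ t, (B t)ᴴ * B t) y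
      = ∑ t, toEuclideanCLM (𝕜 := ℂ)
        ((1 : Matrix (Fin nA) (Fin nA) ℂ) ⊗ₖ ((B t)ᴴ * B t)) y := by
    rw [one_kron_sum, map_sum]
    exact ContinuousLinearMap.sum_apply _ _ _
  calc ∑ t, ‖toEuclideanCLM (𝕜 := ℂ) ((1 : Matrix (Fin nA) (Fin nA) ℂ) ⊗ₖ B t) y‖ ^ 2
      = ∑ t, RCLike.re (inner (𝕜 := ℂ) y (toEuclideanCLM (𝕜 := ℂ)
          ((1 : Matrix (Fin nA) (Fin nA) ℂ) ⊗ₖ ((B t)ᴴ * B t)) y)) := by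
        refine Finset.sum_congr rfl fun t _ => ?_
        rw [norm_sq_CLM_apply, key t]
    _ = RCLike.re (inner (𝕜 := ℂ) y (toEuclideanCLM (𝕜 := ℂ)
          ((1 : Matrix (Fin nA) (Fin nA) ℂ) ⊗ₖ ∑ t, (B t)ᴴ * B t) y)) := by
        rw [hsum, inner_sum, map_sum]
    _ ≤ ‖(1 : Matrix (Fin nA) (Fin nA) ℂ) ⊗ₖ ∑ t, (B t)ᴴ * B t‖ * ‖y‖ ^ 2 :=
        re_inner_CLM_le _ _
    _ ≤ ‖∑ t, (B t)ᴴ * B t‖ * ‖y‖ ^ 2 := by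
        gcongr
        exact opNorm_one_kron_le _

lemma sum_norm_sq_kron_one_le {T : ℕ} (A : Fin T → Matrix (Fin nA) (Fin nA) ℂ)
    (x : EuclideanSpace ℂ (Fin nA × Fin nB)) :
    ∑ t, ‖toEuclideanCLM (𝕜 := ℂ) (A t ⊗ₖ (1 : Matrix (Fin nB) (Fin nB) ℂ)) x‖ ^ 2
      ≤ ‖∑ t, (A t)ᴴ * A t‖ * ‖x‖ ^ 2 := by
  have key : ∀ t, (A t ⊗ₖ (1 : Matrix (Fin nB) (Fin nB) ℂ))ᴴ
      * (A t ⊗ₖ (1 : Matrix (Fin nB) (Fin nB) ℂ))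
      = ((A t)ᴴ * A t) ⊗ₖ (1 : Matrix (Fin nB) (Fin nB) ℂ) := fun t => by
    rw [kron_conjTranspose, Matrix.conjTranspose_one, ← Matrix.mul_kronecker_mul, one_mul]
  have hsum : toEuclideanCLM (𝕜 := ℂ)
      ((∑ t, (A t)ᴴ * A t) ⊗ₖ (1 : Matrix (Fin nB) (Fin nB) ℂ)) x
      = ∑ t, toEuclideanCLM (𝕜 := ℂ)
        (((A t)ᴴ * A t) ⊗ₖ (1 : Matrix (Fin nB) (Fin nB) ℂ)) x := by
    rw [sum_kron_one, map_sum]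
    exact ContinuousLinearMap.sum_apply _ _ _
  calc ∑ t, ‖toEuclideanCLM (𝕜 := ℂ) (A t ⊗ₖ (1 : Matrix (Fin nB) (Fin nB) ℂ)) x‖ ^ 2
      = ∑ t, RCLike.re (inner (𝕜 := ℂ) x (toEuclideanCLM (𝕜 := ℂ)
          (((A t)ᴴ * A t) ⊗ₖ (1 : Matrix (Fin nB) (Fin nB) ℂ)) x)) := by
        refine Finset.sum_congr rfl fun t _ => ?_
        rw [norm_sq_CLM_apply, key t]
    _ = RCLike.re (inner (𝕜 := ℂ) x (toEuclideanCLM (𝕜 := ℂ)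
          ((∑ t, (A t)ᴴ * A t) ⊗ₖ (1 : Matrix (Fin nB) (Fin nB) ℂ)) x)) := by
        rw [hsum, inner_sum, map_sum]
    _ ≤ ‖(∑ t, (A t)ᴴ * A t) ⊗ₖ (1 : Matrix (Fin nB) (Fin nB) ℂ)‖ * ‖x‖ ^ 2 :=
        re_inner_CLM_le _ _
    _ ≤ ‖∑ t, (A t)ᴴ * A t‖ * ‖x‖ ^ 2 := by
        gcongr
        exact opNorm_kron_one_le _

lemma inner_sum_kron_eq {T : ℕ} (A : Fin T → Matrix (Fin nA) (Fin nA) ℂ)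
    (B : Fin T → Matrix (Fin nB) (Fin nB) ℂ)
    (x y : EuclideanSpace ℂ (Fin nA × Fin nB)) :
    inner (𝕜 := ℂ) y (toEuclideanCLM (𝕜 := ℂ) (∑ t, A t ⊗ₖ (B t)ᴴ) x)
      = ∑ t, inner (𝕜 := ℂ)
          (toEuclideanCLM (𝕜 := ℂ) ((1 : Matrix (Fin nA) (Fin nA) ℂ) ⊗ₖ B t) y)
          (toEuclideanCLM (𝕜 := ℂ) (A t ⊗ₖ (1 : Matrix (Fin nB) (Fin nB) ℂ)) x) := by
  have hsum : toEuclideanCLM (𝕜 := ℂ) (∑ t, A t ⊗ₖ (B t)ᴴ) x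
      = ∑ t, toEuclideanCLM (𝕜 := ℂ) (A t ⊗ₖ (B t)ᴴ) x := by
    rw [map_sum]
    exact ContinuousLinearMap.sum_apply _ _ _
  rw [hsum, inner_sum]
  refine Finset.sum_congr rfl fun t _ => ?_
  have hdecomp : A t ⊗ₖ (B t)ᴴ
      = ((1 : Matrix (Fin nA) (Fin nA) ℂ) ⊗ₖ B t)ᴴ
        * (A t ⊗ₖ (1 : Matrix (Fin nB) (Fin nB) ℂ)) := by
    rw [kron_conjTranspose, Matrix.conjTranspose_one, ← Matrix.mul_kronecker_mul,
      one_mul, mul_one]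
  rw [hdecomp, _root_.map_mul, ContinuousLinearMap.mul_apply, toEuclideanCLM_conjTranspose,
    ContinuousLinearMap.adjoint_inner_right]

lemma cs_bound {T : ℕ} (A : Fin T → Matrix (Fin nA) (Fin nA) ℂ)
    (B : Fin T → Matrix (Fin nB) (Fin nB) ℂ) :
    ‖∑ t, A t ⊗ₖ (B t)ᴴ‖
      ≤ Real.sqrt ‖∑ t, (A t)ᴴ * A t‖ * Real.sqrt ‖∑ t, (B t)ᴴ * B t‖ := by
  set a := ‖∑ t, (A t)ᴴ * A t‖ with ha
  set b := ‖∑ t, (B t)ᴴ * B t‖ with hb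
  have ha0 : 0 ≤ a := norm_nonneg _
  have hb0 : 0 ≤ b := norm_nonneg _
  rw [Matrix.cstar_norm_def]
  apply ContinuousLinearMap.opNorm_le_bound _ (by positivity)
  intro x
  set y := toEuclideanCLM (𝕜 := ℂ) (∑ t, A t ⊗ₖ (B t)ᴴ) x with hy
  set u : Fin T → EuclideanSpace ℂ (Fin nA × Fin nB) :=
    fun t => toEuclideanCLM (𝕜 := ℂ) ((1 : Matrix (Fin nA) (Fin nA) ℂ) ⊗ₖ B t) y with hu
  set v : Fin T → EuclideanSpace ℂ (Fin nA × Fin nB) :=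
    fun t => toEuclideanCLM (𝕜 := ℂ) (A t ⊗ₖ (1 : Matrix (Fin nB) (Fin nB) ℂ)) x with hv
  have hub : ∑ t, ‖u t‖ ^ 2 ≤ b * ‖y‖ ^ 2 := sum_norm_sq_one_kron_le B y
  have hva : ∑ t, ‖v t‖ ^ 2 ≤ a * ‖x‖ ^ 2 := sum_norm_sq_kron_one_le A x
  have step3 : ‖y‖ ^ 2 ≤ Real.sqrt a * Real.sqrt b * ‖x‖ * ‖y‖ := by
    have h2 : ‖y‖ ^ 2 = RCLike.re (inner (𝕜 := ℂ) y y) := (inner_self_eq_norm_sq y).symm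
    have h3 : (inner (𝕜 := ℂ) y y) = ∑ t, inner (𝕜 := ℂ) (u t) (v t) := by
      nth_rewrite 2 [hy]
      exact inner_sum_kron_eq A B x y
    rw [h2, h3, map_sum]
    calc ∑ t, RCLike.re (inner (𝕜 := ℂ) (u t) (v t))
        ≤ ∑ t, ‖u t‖ * ‖v t‖ :=
          Finset.sum_le_sum fun t _ =>
            le_trans (RCLike.re_le_norm _) (norm_inner_le_norm _ _)
      _ ≤ Real.sqrt (∑ t, ‖u t‖ ^ 2) * Real.sqrt (∑ t, ‖v t‖ ^ 2) := by
          rw [← Real.sqrt_mul (Finset.sum_nonneg fun t _ => sq_nonneg _)]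
          rw [show ∑ t, ‖u t‖ * ‖v t‖
            = Real.sqrt ((∑ t, ‖u t‖ * ‖v t‖) ^ 2) from
            (Real.sqrt_sq (Finset.sum_nonneg fun t _ =>
              mul_nonneg (norm_nonneg _) (norm_nonneg _))).symm]
          exact Real.sqrt_le_sqrt (Finset.sum_mul_sq_le_sq_mul_sq _ _ _)
      _ ≤ Real.sqrt (b * ‖y‖ ^ 2) * Real.sqrt (a * ‖x‖ ^ 2) :=
          mul_le_mul (Real.sqrt_le_sqrt hub) (Real.sqrt_le_sqrt hva)
            (Real.sqrt_nonneg _) (Real.sqrt_nonneg _)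
      _ = Real.sqrt a * Real.sqrt b * ‖x‖ * ‖y‖ := by
          rw [Real.sqrt_mul hb0, Real.sqrt_mul ha0, Real.sqrt_sq (norm_nonneg _),
            Real.sqrt_sq (norm_nonneg _)]
          ring
  rcases eq_or_lt_of_le (norm_nonneg y) with h0 | hpos
  · rw [← h0]
    positivity
  · have h4 : ‖y‖ * ‖y‖ ≤ Real.sqrt a * Real.sqrt b * ‖x‖ * ‖y‖ := by
      rw [← sq]; exact step3
    exact le_of_mul_le_mul_right (by linarith) hpos

end DiamondAux

/-- The diamond norm is a tensor norm: `‖A ⊗ B‖_⋄ = ‖A‖·‖B‖`. -/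
theorem diamondNorm_kronecker {nA nB : ℕ}
    (A : Matrix (Fin nA) (Fin nA) ℂ) (B : Matrix (Fin nB) (Fin nB) ℂ) :
    diamondNorm (A ⊗ₖ B) = ‖A‖ * ‖B‖ := by
  have hlb : ∀ r ∈ { r : ℝ | ∃ (T : ℕ) (A' : Fin T → Matrix (Fin nA) (Fin nA) ℂ)
      (B' : Fin T → Matrix (Fin nB) (Fin nB) ℂ),
      A ⊗ₖ B = ∑ t, (A' t) ⊗ₖ (B' t)ᴴ ∧
      r = Real.sqrt ‖∑ t, (A' t)ᴴ * A' t‖ * Real.sqrt ‖∑ t, (B' t)ᴴ * B' t‖ },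
      ‖A‖ * ‖B‖ ≤ r := by
    rintro r ⟨T, A', B', hQ, rfl⟩
    calc ‖A‖ * ‖B‖ ≤ ‖A ⊗ₖ B‖ := norm_mul_norm_le_opNorm_kron A B
      _ = ‖∑ t, (A' t) ⊗ₖ (B' t)ᴴ‖ := by rw [hQ]
      _ ≤ _ := cs_bound A' B'
  have hmem : (‖A‖ * ‖B‖) ∈ { r : ℝ | ∃ (T : ℕ)
      (A' : Fin T → Matrix (Fin nA) (Fin nA) ℂ)
      (B' : Fin T → Matrix (Fin nB) (Fin nB) ℂ),
      A ⊗ₖ B = ∑ t, (A' t) ⊗ₖ (B' t)ᴴ ∧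
      r = Real.sqrt ‖∑ t, (A' t)ᴴ * A' t‖ * Real.sqrt ‖∑ t, (B' t)ᴴ * B' t‖ } := by
    refine ⟨1, fun _ => A, fun _ => Bᴴ, ?_, ?_⟩
    · rw [Fin.sum_univ_one, Matrix.conjTranspose_conjTranspose]
    · rw [Fin.sum_univ_one, Fin.sum_univ_one, Matrix.l2_opNorm_conjTranspose_mul_self,
        Matrix.l2_opNorm_conjTranspose_mul_self, Matrix.l2_opNorm_conjTranspose,
        Real.sqrt_mul_self (norm_nonneg A), Real.sqrt_mul_self (norm_nonneg B)]
  refine le_antisymm (csInf_le ⟨‖A‖ * ‖B‖, hlb⟩ hmem) (le_csInf ⟨_, hmem⟩ hlb)
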